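/- Let C be cocomplete and cowellpowered with an (E,M)-factorisation system in which E consists of epimorphisms, and suppose Σ : C → C preserves E-cointersections. Let (Q,δ,i,o) be a Σ-tree automaton such that o ∈ Quot_E(Q). Then the greatest fixed point of the monotone operator Θ_δ ∧ o on the complete lattice Quot_E(Q) (where ∧ is the pointwise meet with the constant o) is the minimisation of (Q,δ,i,o). -/

import Mathlib

open CategoryTheory CategoryTheory.Limits

universe v u

namespace TreeAutPaper

variable {C : Type u} [Category.{v} C]

/-- A representative of a quotient of `X` lying in the class `E`:
an epimorphism out of `X` belonging to `E`. -/
structure EQuot (E : MorphismProperty C) (X : C) where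
  obj : C
  hom : X ⟶ obj
  epi : Epi hom
  mem : E hom

/-- The order on quotients: `q ≤ r` iff `r = h ∘ q` for some `h`. -/
def EQuot.le {E : MorphismProperty C} {X : C} (q r : EQuot E X) : Prop :=
  ∃ h : q.obj ⟶ r.obj, q.hom ≫ h = r.hom

/-- Two quotient representatives are equivalent when each is below the other. -/
def EQuot.equiv {E : MorphismProperty C} {X : C} (q r : EQuot E X) : Prop :=
  q.le r ∧ r.le q

/-- `C` is cowellpowered: quotients (epimorphisms out of an object, up to equivalence)
of every object form a set (an essentially `v`-small collection). -/
def Cowellpowered (C : Type u) [Category.{v} C] : Prop :=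
  ∀ X : C, Small.{v} (Quot (fun q r : EQuot (⊤ : MorphismProperty C) X => EQuot.equiv q r))

/-- An `(E,M)`-factorisation system: both classes are closed under composition with
isomorphisms, every morphism factors as an `E`-morphism followed by an `M`-morphism, and
we have a unique diagonal fill-in property. -/
structure IsFactorizationSystem (E M : MorphismProperty C) : Prop where
  respectsIso_E : E.RespectsIso
  respectsIso_M : M.RespectsIso
  factor : ∀ {X Y : C} (f : X ⟶ Y), ∃ (Z : C) (e : X ⟶ Z) (m : Z ⟶ Y), E e ∧ M m ∧ e ≫ m = f
  diag : ∀ {A B X Y : C} (e : A ⟶ B) (m : X ⟶ Y) (f : A ⟶ X) (g : B ⟶ Y),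
    E e → M m → f ≫ m = e ≫ g → ∃! d : B ⟶ X, e ≫ d = f ∧ d ≫ m = g

/-- `S` preserves `E`-cointersections, i.e. wide pushouts of families of epimorphisms
lying in `E`. -/
def PreservesECointersections (E : MorphismProperty C) (S : C ⥤ C) : Prop :=
  ∀ (J : Type (max u v)) (X : C) (objs : J → C) (arrows : ∀ j : J, X ⟶ objs j),
    (∀ j, E (arrows j)) → (∀ j, Epi (arrows j)) →
    ∀ c : Cocone (WidePushoutShape.wideSpan X objs arrows),
      Nonempty (IsColimit c) → Nonempty (IsColimit (S.mapCocone c))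

/-- `f : ΣX ⟶ Y` factors through (the image under `Σ` of) the quotient `q`. -/
def FactorsThru {E : MorphismProperty C} (S : C ⥤ C) {X Y : C} (f : S.obj X ⟶ Y)
    (q : EQuot E X) : Prop :=
  ∃ g : S.obj q.obj ⟶ Y, S.map q.hom ≫ g = f

/-- `q` is the `E`-cobase of `f : ΣX ⟶ Y`: the greatest quotient of `X` in `E`
through whose `Σ`-image `f` factors. -/
def IsCobase (E : MorphismProperty C) (S : C ⥤ C) {X Y : C} (f : S.obj X ⟶ Y)
    (q : EQuot E X) : Prop :=
  FactorsThru S f q ∧ ∀ r : EQuot E X, FactorsThru S f r → r.le q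

variable (Sg : C ⥤ C)

/-- A `Σ`-tree automaton over input object `I` and output object `O`. -/
structure TreeAut (I O : C) where
  Q : Endofunctor.Algebra Sg
  i : I ⟶ Q.a
  o : Q.a ⟶ O

variable {Sg} {I O : C}

/-- `h` is a homomorphism of automata from `A` to `B`. -/
structure IsAutHom (A B : TreeAut Sg I O) (h : A.Q.a ⟶ B.Q.a) : Prop where
  alg : Sg.map h ≫ B.Q.str = A.Q.str ≫ h
  hi : A.i ≫ h = B.i
  ho : h ≫ B.o = A.o

/-- `(B, q)` is a quotient automaton of `A`: `q` is an epimorphism lying in `E`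
which is a homomorphism of automata. -/
structure IsQuotAut (E : MorphismProperty C) (A B : TreeAut Sg I O)
    (q : A.Q.a ⟶ B.Q.a) : Prop where
  isHom : IsAutHom A B q
  epi : Epi q
  mem : E q

/-- `(M, qm)` is the minimisation of `A`: a quotient automaton through which every
quotient automaton of `A` factors by a (necessarily unique) automaton homomorphism. -/
def IsMinimisation (E : MorphismProperty C) (A M : TreeAut Sg I O)
    (qm : A.Q.a ⟶ M.Q.a) : Prop :=
  IsQuotAut E A M qm ∧
    ∀ (B : TreeAut Sg I O) (q' : A.Q.a ⟶ B.Q.a), IsQuotAut E A B q' →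
      ∃! h : B.Q.a ⟶ M.Q.a, IsAutHom B M h ∧ q' ≫ h = qm

/-- `A` is simple: every quotient automaton of `A` has its quotient map an isomorphism. -/
def IsSimple (E : MorphismProperty C) (A : TreeAut Sg I O) : Prop :=
  ∀ (B : TreeAut Sg I O) (q : A.Q.a ⟶ B.Q.a), IsQuotAut E A B q → IsIso q

section Varietor

variable (Fr : C ⥤ Endofunctor.Algebra Sg) (adj : Fr ⊣ Endofunctor.Algebra.forget Sg)

/-- The reachability map of an automaton: the underlying morphism of the adjoint
transpose of the initial-state assignment. -/
def rch (A : TreeAut Sg I O) : (Fr.obj I).a ⟶ A.Q.a :=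
  ((adj.homEquiv I A.Q).symm A.i).f

/-- The language of an automaton. -/
def lang (A : TreeAut Sg I O) : (Fr.obj I).a ⟶ O :=
  rch Fr adj A ≫ A.o

/-- The automaton `(Σ◇I, α_I, η_I, L)` on the free `Σ`-algebra over `I`. -/
def freeAut (L : (Fr.obj I).a ⟶ O) : TreeAut Sg I O :=
  { Q := Fr.obj I
    i := adj.unit.app I
    o := L }

/-- `A` is reachable: its reachability map lies in `E`. -/
def Reachable (E : MorphismProperty C) (A : TreeAut Sg I O) : Prop :=
  E (rch Fr adj A)

/-- `A` is minimal: reachable, and every reachable automaton with the same language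
admits a (necessarily unique) automaton homomorphism into `A`. -/
def Minimal (E : MorphismProperty C) (A : TreeAut Sg I O) : Prop :=
  Reachable Fr adj E A ∧
    ∀ B : TreeAut Sg I O, Reachable Fr adj E B → lang Fr adj B = lang Fr adj A →
      ∃! h : B.Q.a ⟶ A.Q.a, IsAutHom B A h

end Varietor

section GfpHelpers

lemma EQuot.le_refl {E : MorphismProperty C} {X : C} (q : EQuot E X) : q.le q :=
  ⟨𝟙 _, Category.comp_id _⟩

lemma EQuot.le_trans {E : MorphismProperty C} {X : C} {q r s : EQuot E X}
    (h₁ : q.le r) (h₂ : r.le s) : q.le s := by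
  obtain ⟨a, ha⟩ := h₁
  obtain ⟨b, hb⟩ := h₂
  exact ⟨a ≫ b, by rw [← Category.assoc, ha, hb]⟩

lemma EQuot.equivalence_equiv {E : MorphismProperty C} (X : C) :
    Equivalence (fun q r : EQuot E X => EQuot.equiv q r) where
  refl q := ⟨q.le_refl, q.le_refl⟩
  symm h := ⟨h.2, h.1⟩
  trans h₁ h₂ := ⟨EQuot.le_trans h₁.1 h₂.1, EQuot.le_trans h₂.2 h₁.2⟩

/-- If `Σ` preserves `E`-cointersections, it maps morphisms of `E` to epimorphisms. -/
lemma epi_map_of_mem {E : MorphismProperty C} {Sg : C ⥤ C}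
    (hpres : PreservesECointersections E Sg)
    {X Y : C} (e : X ⟶ Y) (he : E e) (hepi : Epi e) : Epi (Sg.map e) := by
  classical
  let J : Type (max u v) := ULift.{max u v} Bool
  let objs : J → C := fun _ => Y
  let arrows : ∀ _ : J, X ⟶ Y := fun _ => e
  let D := WidePushoutShape.wideSpan X objs arrows
  let c : Cocone D :=
    WidePushoutShape.mkCocone (F := D) e (fun _ => 𝟙 Y) (fun _ => Category.comp_id e)
  have key : ∀ (s : Cocone D) (j j' : J), s.ι.app (some j) = s.ι.app (some j') := by
    intro s j j'
    have h1 : e ≫ s.ι.app (some j) = s.ι.app none := s.w (WidePushoutShape.Hom.init j)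
    have h2 : e ≫ s.ι.app (some j') = s.ι.app none := s.w (WidePushoutShape.Hom.init j')
    exact (cancel_epi e).1 (h1.trans h2.symm)
  have hc : IsColimit c :=
    { desc := fun s => s.ι.app (some ⟨true⟩)
      fac := by
        intro s j
        match j with
        | none =>
          show e ≫ s.ι.app (some ⟨true⟩) = s.ι.app none
          exact s.w (WidePushoutShape.Hom.init ⟨true⟩)
        | some j =>
          show 𝟙 Y ≫ s.ι.app (some ⟨true⟩) = s.ι.app (some j)
          refine (Category.id_comp _).trans ?_
          exact key s ⟨true⟩ j
      uniq := by
        intro s m hm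
        have := hm (some ⟨true⟩)
        show m = s.ι.app (some ⟨true⟩)
        rw [← this]
        exact (Category.id_comp m).symm }
  obtain ⟨hmap⟩ := hpres J X objs arrows (fun _ => he) (fun _ => hepi) c ⟨hc⟩
  constructor
  intro Z u v huv
  let s : Cocone (D ⋙ Sg) :=
    WidePushoutShape.mkCocone (F := D ⋙ Sg) (Sg.map e ≫ u)
      (fun j => if j.down then u else v)
      (by
        intro j
        show Sg.map e ≫ (if j.down then u else v) = Sg.map e ≫ u
        by_cases hj : j.down <;> simp [hj, huv])
  have hu : Sg.map (𝟙 Y) ≫ hmap.desc s = u := by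
    have := hmap.fac s (some ⟨true⟩)
    exact this
  have hv : Sg.map (𝟙 Y) ≫ hmap.desc s = v := by
    have := hmap.fac s (some ⟨false⟩)
    exact this
  rw [← hu, ← hv]

/-- Existence of the `E`-cobase of a morphism `f : ΣX ⟶ Y`, constructed as the
cointersection of all `E`-quotients of `X` through whose `Σ`-image `f` factors. -/
lemma exists_cobase [HasColimits C] (hcwp : Cowellpowered C)
    {E M : MorphismProperty C} (hfs : IsFactorizationSystem E M)
    (hE : ∀ ⦃X Y : C⦄ (f : X ⟶ Y), E f → Epi f)
    {Sg : C ⥤ C} (hpres : PreservesECointersections E Sg)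
    {X Y : C} (f : Sg.obj X ⟶ Y) :
    ∃ t : EQuot E X, IsCobase E Sg f t := by
  classical
  haveI : Small.{v} (Quot (fun q r : EQuot (⊤ : MorphismProperty C) X => EQuot.equiv q r)) :=
    hcwp X
  let R : EQuot (⊤ : MorphismProperty C) X → EQuot (⊤ : MorphismProperty C) X → Prop :=
    fun q r => EQuot.equiv q r
  let P : EQuot (⊤ : MorphismProperty C) X → Prop :=
    fun t => E t.hom ∧ ∃ g : Sg.obj t.obj ⟶ Y, Sg.map t.hom ≫ g = f
  let Sub := {c : Quot R // ∃ t, P t ∧ Quot.mk R t = c}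
  let rep : Sub → EQuot (⊤ : MorphismProperty C) X := fun c => c.2.choose
  have hrepP : ∀ c, P (rep c) := fun c => c.2.choose_spec.1
  have hrepmk : ∀ c : Sub, Quot.mk R (rep c) = c.1 := fun c => c.2.choose_spec.2
  let J : Type (max u v) := ULift.{max u v} (Shrink.{v} Sub)
  let rep' : J → EQuot (⊤ : MorphismProperty C) X :=
    fun j => rep ((equivShrink Sub).symm j.down)
  let objs : J → C := fun j => (rep' j).obj
  let arrows : ∀ j : J, X ⟶ objs j := fun j => (rep' j).hom
  have hEarr : ∀ j, E (arrows j) := fun j => (hrepP _).1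
  have hepis : ∀ j, Epi (arrows j) := fun j => (rep' j).epi
  haveI : HasColimitsOfShape (WidePushoutShape J) C :=
    hasColimitsOfShape_of_equivalence
      (WidePushoutShape.equivalenceOfEquiv J
        (Equiv.ulift.{max u v, v}.symm : Shrink.{v} Sub ≃ J))
  let D := WidePushoutShape.wideSpan X objs arrows
  let c : Cocone D := colimit.cocone D
  have hc : IsColimit c := colimit.isColimit D
  let W := c.pt
  let qW : X ⟶ W := c.ι.app none
  let ι : ∀ j : J, objs j ⟶ W := fun j => c.ι.app (some j)
  have w : ∀ j, arrows j ≫ ι j = qW := fun j => c.w (WidePushoutShape.Hom.init j)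
  have hepiW : Epi qW := by
    constructor
    intro Z u v huv
    refine hc.hom_ext ?_
    intro j
    match j with
    | none => exact huv
    | some j =>
      haveI := hepis j
      refine (cancel_epi (arrows j)).1 ?_
      show arrows j ≫ ι j ≫ u = arrows j ≫ ι j ≫ v
      rw [← Category.assoc, w j, ← Category.assoc, w j]
      exact huv
  -- `qW` lies in `E` via the factorisation system
  obtain ⟨Z, e, m, heZ, hmZ, hem⟩ := hfs.factor qW
  have hd : ∀ j : J, ∃! d, arrows j ≫ d = e ∧ d ≫ m = ι j := fun j =>
    hfs.diag (arrows j) m e (ι j) (hEarr j) hmZ (by rw [hem, w j])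
  choose d hd1 hd2 using fun j => (hd j).exists
  let c' : Cocone D := WidePushoutShape.mkCocone (F := D) e d hd1
  let u : W ⟶ Z := hc.desc c'
  have hfacn : qW ≫ u = e := hc.fac c' none
  have hfacs : ∀ j, ι j ≫ u = d j := fun j => hc.fac c' (some j)
  have hum : u ≫ m = 𝟙 W := by
    refine hc.hom_ext ?_
    intro j
    match j with
    | none =>
      show qW ≫ u ≫ m = qW ≫ 𝟙 W
      rw [← Category.assoc, hfacn, hem, Category.comp_id]
    | some j =>
      show ι j ≫ u ≫ m = ι j ≫ 𝟙 W
      rw [← Category.assoc, hfacs j, hd2 j, Category.comp_id]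
  have hmu : m ≫ u = 𝟙 Z := by
    haveI := hE e heZ
    refine (cancel_epi e).1 ?_
    rw [← Category.assoc, hem, hfacn, Category.comp_id]
  haveI : IsIso m := ⟨u, hmu, hum⟩
  have hEW : E qW := by
    rw [← hem]
    exact hfs.respectsIso_E.toRespectsRight.postcomp m ‹IsIso m› e heZ
  -- `f` factors through `qW`, using preservation of the cointersection
  choose gs hgs using fun j : J => (hrepP ((equivShrink Sub).symm j.down)).2
  obtain ⟨hmap⟩ := hpres J X objs arrows hEarr hepis c ⟨hc⟩
  let c₂ : Cocone (D ⋙ Sg) := WidePushoutShape.mkCocone (F := D ⋙ Sg) f gs hgs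
  refine ⟨⟨W, qW, hepiW, hEW⟩, ⟨hmap.desc c₂, ?_⟩, ?_⟩
  · exact hmap.fac c₂ none
  · -- greatest: every quotient through which `f` factors is below `qW`
    intro r hr
    obtain ⟨g, hg⟩ := hr
    let rT : EQuot (⊤ : MorphismProperty C) X := ⟨r.obj, r.hom, r.epi, trivial⟩
    have hP : P rT := ⟨r.mem, g, hg⟩
    let cq : Sub := ⟨Quot.mk R rT, rT, hP, rfl⟩
    let j : J := ⟨equivShrink Sub cq⟩
    have hj : (equivShrink Sub).symm j.down = cq := Equiv.symm_apply_apply _ _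
    have hmk : Quot.mk R (rep' j) = Quot.mk R rT := by
      show Quot.mk R (rep ((equivShrink Sub).symm j.down)) = Quot.mk R rT
      rw [hj]
      exact hrepmk cq
    have hequiv : R (rep' j) rT :=
      (EQuot.equivalence_equiv X).eqvGen_iff.mp (Quot.eqvGen_exact hmk)
    obtain ⟨h, hh⟩ := hequiv.2
    exact ⟨h ≫ ι j, by rw [← Category.assoc]; show (rT.hom ≫ h) ≫ ι j = qW; rw [hh]; exact w j⟩

end GfpHelpers


/-- **minimisation as a greatest fixed point.** Suppose `Σ` preserves
`E`-cointersections and let `(Q,δ,i,o)` be an automaton with `o ∈ Quot_E(Q)`. If `qm`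
is the greatest fixed point of the monotone operator `Θ_δ ∧ o` on the complete lattice
`Quot_E(Q)` — characterised, by Knaster–Tarski, as the greatest post-fixed point, i.e.
`qm ≤ Θ_δ(qm)`, `qm ≤ o`, and every `q'` with `q' ≤ Θ_δ(q')` and `q' ≤ o` satisfies
`q' ≤ qm` — then `qm` carries an automaton structure making it the minimisation of
`(Q,δ,i,o)`. -/
theorem gfp_is_minimisation
    {C : Type u} [Category.{v} C] [HasColimits C] (hcwp : Cowellpowered C)
    (E M : MorphismProperty C) (hfs : IsFactorizationSystem E M)
    (hE : ∀ ⦃X Y : C⦄ (f : X ⟶ Y), E f → Epi f)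
    {Sg : C ⥤ C} (hpres : PreservesECointersections E Sg)
    {I O : C} (A : TreeAut Sg I O) (hoEpi : Epi A.o) (hoE : E A.o)
    (qm : EQuot E A.Q.a)
    -- `qm ≤ Θ_δ(qm)` :
    (hpost₁ : ∀ t : EQuot E A.Q.a, IsCobase E Sg (A.Q.str ≫ qm.hom) t → qm.le t)
    -- `qm ≤ o` :
    (hpost₂ : qm.le ⟨O, A.o, hoEpi, hoE⟩)
    -- `qm` is the greatest such, hence the greatest fixed point of `Θ_δ ∧ o` :
    (hgreatest : ∀ q' : EQuot E A.Q.a,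
      (∀ t : EQuot E A.Q.a, IsCobase E Sg (A.Q.str ≫ q'.hom) t → q'.le t) →
      q'.le ⟨O, A.o, hoEpi, hoE⟩ → q'.le qm) :
    ∃ (δm : Sg.obj qm.obj ⟶ qm.obj) (om : qm.obj ⟶ O),
      IsMinimisation E A ⟨⟨qm.obj, δm⟩, A.i ≫ qm.hom, om⟩ qm.hom := by
  classical
  -- construct the algebra structure on `qm.obj` using `qm ≤ Θ_δ(qm)`
  obtain ⟨t, ht⟩ := exists_cobase hcwp hfs hE hpres (A.Q.str ≫ qm.hom)
  obtain ⟨h, hh⟩ := hpost₁ t ht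
  obtain ⟨g, hg⟩ := ht.1
  set δm : Sg.obj qm.obj ⟶ qm.obj := Sg.map h ≫ g with hδm
  have hδ : Sg.map qm.hom ≫ δm = A.Q.str ≫ qm.hom := by
    rw [hδm, ← Category.assoc, ← Sg.map_comp, hh, hg]
  obtain ⟨om, hom⟩ := hpost₂
  refine ⟨δm, om, ⟨⟨hδ, rfl, hom⟩, qm.epi, qm.mem⟩, ?_⟩
  intro B q' hq'
  let q'' : EQuot E A.Q.a := ⟨B.Q.a, q', hq'.epi, hq'.mem⟩
  have h1 : ∀ t' : EQuot E A.Q.a, IsCobase E Sg (A.Q.str ≫ q''.hom) t' → q''.le t' := by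
    intro t' ht'
    exact ht'.2 q'' ⟨B.Q.str, hq'.isHom.alg⟩
  have h2 : q''.le ⟨O, A.o, hoEpi, hoE⟩ := ⟨B.o, hq'.isHom.ho⟩
  obtain ⟨k, hk⟩ := hgreatest q'' h1 h2
  have hk' : q' ≫ k = qm.hom := hk
  haveI hq'epi : Epi q' := hq'.epi
  haveI : Epi (Sg.map q') := epi_map_of_mem hpres q' hq'.mem hq'.epi
  have hkhom : IsAutHom B ⟨⟨qm.obj, δm⟩, A.i ≫ qm.hom, om⟩ k := by
    refine ⟨?_, ?_, ?_⟩
    · -- algebra homomorphism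
      refine (cancel_epi (Sg.map q')).1 ?_
      calc Sg.map q' ≫ Sg.map k ≫ δm
          = Sg.map (q' ≫ k) ≫ δm := by rw [Sg.map_comp, Category.assoc]
        _ = Sg.map qm.hom ≫ δm := by rw [hk']
        _ = A.Q.str ≫ qm.hom := hδ
        _ = A.Q.str ≫ q' ≫ k := by rw [hk']
        _ = (Sg.map q' ≫ B.Q.str) ≫ k := by rw [hq'.isHom.alg, Category.assoc]
        _ = Sg.map q' ≫ B.Q.str ≫ k := Category.assoc _ _ _
    · show B.i ≫ k = A.i ≫ qm.hom
      rw [← hq'.isHom.hi, Category.assoc, hk']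
    · show k ≫ om = B.o
      refine (cancel_epi q').1 ?_
      rw [← Category.assoc, hk', hom, hq'.isHom.ho]
  refine ⟨k, ⟨hkhom, hk'⟩, ?_⟩
  intro k' ⟨_, hk''⟩
  exact (cancel_epi q').1 (hk''.trans hk'.symm)

end TreeAutPaper
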